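/- For a lazy finite Markov kernel P (i.e., P(x,x) ≥ 1/2 for all x) with stationary distribution π and any subset A of the state space, Q(A,Aᶜ) = ∫₀^{1/2} (π(A_u) − π(A)) du = ∫_{1/2}^1 (π(A) − π(A_u)) du. -/

import Mathlib

open Finset MeasureTheory

variable {V : Type*}

/-- Ergodic flow from a set `A` into a state `y`: `Q(A,y) = ∑_{x∈A} π(x) P(x,y)`. -/
def ergFlow [Fintype V] (π : V → ℝ) (P : Matrix V V ℝ) (A : Finset V) (y : V) : ℝ :=
  ∑ x ∈ A, π x * P x y

/-- The evolving set `A_u = {y : Q(A,y) ≥ u π(y)}`. -/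
noncomputable def evolSet [Fintype V] (π : V → ℝ) (P : Matrix V V ℝ) (A : Finset V) (u : ℝ) :
    Finset V :=
  Finset.univ.filter (fun y => u * π y ≤ ergFlow π P A y)

/-- Stationary mass of a set: `π(A)`. -/
def mass (π : V → ℝ) (A : Finset V) : ℝ := ∑ y ∈ A, π y

/-- Ergodic flow between sets: `Q(A,B)`. -/
def ergFlowSet (π : V → ℝ) (P : Matrix V V ℝ) (A B : Finset V) : ℝ :=
  ∑ x ∈ A, ∑ y ∈ B, π x * P x y

lemma step_integrable (c k a b : ℝ) :
    IntervalIntegrable (fun u => if u ≤ c then k else 0) volume a b := by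
  have h : (fun u : ℝ => if u ≤ c then k else 0)
      = Set.indicator (Set.Iic c) (fun _ => k) := by
    funext u; by_cases h : u ≤ c <;> simp [Set.indicator, Set.mem_Iic, h]
  rw [h, intervalIntegrable_iff]
  exact (integrableOn_const measure_Ioc_lt_top.ne).indicator measurableSet_Iic

lemma step_integral (k c a b : ℝ) (ha : a ≤ c) (hb : c ≤ b) :
    ∫ u in a..b, (if u ≤ c then k else 0) = k * (c - a) := by
  rw [← intervalIntegral.integral_add_adjacent_intervals
    (step_integrable c k a c) (step_integrable c k c b)]
  have h1 : (∫ u in a..c, (if u ≤ c then k else 0)) = k * (c - a) := by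
    rw [intervalIntegral.integral_congr (g := fun _ => k) ?_,
      intervalIntegral.integral_const, smul_eq_mul]
    · ring
    · intro u hu
      rw [Set.uIcc_of_le ha] at hu
      simp [hu.2]
  have h2 : (∫ u in c..b, (if u ≤ c then k else 0)) = 0 := by
    rw [intervalIntegral.integral_congr_ae (g := fun _ => (0:ℝ)) ?_,
      intervalIntegral.integral_zero]
    refine Filter.Eventually.of_forall fun u hu => ?_
    rw [Set.uIoc_of_le hb] at hu
    simp [not_le.mpr hu.1]
  rw [h1, h2, add_zero]

/-- For a lazy chain, ergodic flow equals the area between `π(A_u)` and `π(A)`. -/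
theorem ergFlow_eq_integral [Fintype V] [DecidableEq V]
    (π : V → ℝ) (P : Matrix V V ℝ)
    (hPnn : ∀ x y, 0 ≤ P x y) (hProw : ∀ x, ∑ y, P x y = 1)
    (hπpos : ∀ x, 0 < π x) (hπsum : ∑ x, π x = 1)
    (hstat : ∀ y, ∑ x, π x * P x y = π y)
    (hirr : ∀ x y : V, ∃ n : ℕ, 0 < (P ^ n) x y)
    (hlazy : ∀ x, (1:ℝ)/2 ≤ P x x)
    (A : Finset V) :
    ergFlowSet π P A Aᶜ = ∫ u in (0:ℝ)..(1/2), (mass π (evolSet π P A u) - mass π A) ∧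
    ergFlowSet π P A Aᶜ = ∫ u in (1/2:ℝ)..1, (mass π A - mass π (evolSet π P A u)) := by
  set Q := ergFlow π P A with hQdef
  have hQnn : ∀ y, 0 ≤ Q y := fun y =>
    Finset.sum_nonneg fun x _ => mul_nonneg (hπpos x).le (hPnn x y)
  have hQle : ∀ y, Q y ≤ π y := fun y => by
    rw [← hstat y]
    exact Finset.sum_le_sum_of_subset_of_nonneg (Finset.subset_univ A)
      (fun x _ _ => mul_nonneg (hπpos x).le (hPnn x y))
  have hAlow : ∀ y ∈ A, π y / 2 ≤ Q y := by
    intro y hy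
    have h1 : π y * (1/2) ≤ π y * P y y :=
      mul_le_mul_of_nonneg_left (hlazy y) (hπpos y).le
    have h2 : π y * P y y ≤ Q y :=
      Finset.single_le_sum (f := fun x => π x * P x y)
        (fun x _ => mul_nonneg (hπpos x).le (hPnn x y)) hy
    linarith
  have hAup : ∀ y ∉ A, Q y ≤ π y / 2 := by
    intro y hy
    have hsplit : Q y + ∑ x ∈ Aᶜ, π x * P x y = π y := by
      rw [hQdef]
      show (∑ x ∈ A, π x * P x y) + ∑ x ∈ Aᶜ, π x * P x y = π y
      rw [Finset.sum_add_sum_compl]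
      exact hstat y
    have h1 : π y * (1/2) ≤ π y * P y y :=
      mul_le_mul_of_nonneg_left (hlazy y) (hπpos y).le
    have h2 : π y * P y y ≤ ∑ x ∈ Aᶜ, π x * P x y :=
      Finset.single_le_sum (f := fun x => π x * P x y)
        (fun x _ => mul_nonneg (hπpos x).le (hPnn x y)) (Finset.mem_compl.mpr hy)
    linarith
  have hmass : ∀ u : ℝ, mass π (evolSet π P A u) = ∑ y, if u ≤ Q y / π y then π y else 0 := by
    intro u
    rw [mass, evolSet, Finset.sum_filter]
    refine Finset.sum_congr rfl fun y _ => ?_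
    simp only [le_div_iff₀ (hπpos y)]
    rfl
  have hflow : ergFlowSet π P A Aᶜ = ∑ y ∈ Aᶜ, Q y := Finset.sum_comm
  have key : ergFlowSet π P A Aᶜ + ∑ y ∈ A, Q y = mass π A := by
    have hc : (∑ y ∈ A, Q y) = ∑ x ∈ A, ∑ y ∈ A, π x * P x y := Finset.sum_comm
    rw [hc, ergFlowSet, ← Finset.sum_add_distrib]
    refine Finset.sum_congr rfl fun x hx => ?_
    rw [Finset.sum_compl_add_sum, ← Finset.mul_sum, hProw x, mul_one]
  have h1 : (∫ u in (0:ℝ)..(1/2), (mass π (evolSet π P A u) - mass π A))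
      = ∑ y ∈ Aᶜ, Q y := by
    have heq : Set.EqOn (fun u => mass π (evolSet π P A u) - mass π A)
        (fun u => ∑ y ∈ Aᶜ, (if u ≤ Q y / π y then π y else 0))
        (Set.uIcc (0:ℝ) (1/2)) := by
      intro u hu
      rw [Set.uIcc_of_le (by norm_num)] at hu
      have hsA : (∑ y ∈ A, (if u ≤ Q y / π y then π y else 0)) = mass π A := by
        refine Finset.sum_congr rfl fun y hy => ?_
        rw [if_pos]
        rw [le_div_iff₀ (hπpos y)]
        nlinarith [hπpos y, hu.2, hAlow y hy]
      have := Finset.sum_compl_add_sum A (fun y => if u ≤ Q y / π y then π y else 0)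
      simp only [hmass u]
      linarith
    rw [intervalIntegral.integral_congr heq,
      intervalIntegral.integral_finset_sum
        (fun y _ => step_integrable (Q y / π y) (π y) 0 (1/2))]
    refine Finset.sum_congr rfl fun y hy => ?_
    have hc1 : Q y / π y ≤ 1/2 := by
      rw [div_le_iff₀ (hπpos y)]
      have := hAup y (Finset.mem_compl.mp hy)
      linarith
    rw [step_integral (π y) (Q y / π y) 0 (1/2)
      (div_nonneg (hQnn y) (hπpos y).le) hc1]
    have hne := (hπpos y).ne'
    field_simp
    ring
  have h2 : (∫ u in (1/2:ℝ)..1, (mass π A - mass π (evolSet π P A u)))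
      = ∑ y ∈ A, (π y - Q y) := by
    have heq : ∀ᵐ u ∂(volume : Measure ℝ), u ∈ Set.uIoc (1/2:ℝ) 1 →
        (fun u => mass π A - mass π (evolSet π P A u)) u
          = (fun u => ∑ y ∈ A, (π y - if u ≤ Q y / π y then π y else 0)) u := by
      refine Filter.Eventually.of_forall fun u hu => ?_
      rw [Set.uIoc_of_le (by norm_num)] at hu
      have hz : (∑ y ∈ Aᶜ, (if u ≤ Q y / π y then π y else 0)) = 0 := by
        refine Finset.sum_eq_zero fun y hy => ?_
        rw [if_neg]
        rw [not_le, div_lt_iff₀ (hπpos y)]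
        nlinarith [hπpos y, hAup y (Finset.mem_compl.mp hy), hu.1]
      have hsplit := Finset.sum_compl_add_sum A (fun y => if u ≤ Q y / π y then π y else 0)
      simp only [hmass u, Finset.sum_sub_distrib]
      have hmA : (∑ y ∈ A, π y) = mass π A := rfl
      linarith
    rw [intervalIntegral.integral_congr_ae heq,
      intervalIntegral.integral_finset_sum
        (fun y _ => (intervalIntegrable_const).sub
          (step_integrable (Q y / π y) (π y) (1/2) 1))]
    refine Finset.sum_congr rfl fun y hy => ?_
    have hc1 : (1:ℝ)/2 ≤ Q y / π y := by
      rw [le_div_iff₀ (hπpos y)]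
      have := hAlow y hy
      linarith
    have hc2 : Q y / π y ≤ 1 := by
      rw [div_le_one (hπpos y)]; exact hQle y
    rw [intervalIntegral.integral_sub intervalIntegrable_const
        (step_integrable (Q y / π y) (π y) (1/2) 1),
      intervalIntegral.integral_const, smul_eq_mul,
      step_integral (π y) (Q y / π y) (1/2) 1 hc1 hc2]
    have hne := (hπpos y).ne'
    field_simp
    ring
  constructor
  · rw [h1]; exact hflow
  · rw [h2, Finset.sum_sub_distrib]
    have hmA : (∑ y ∈ A, π y) = mass π A := rfl
    linarith
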